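/- The evaluation map f ↦ (f(1), f(Π)) is a k-linear bijection from the space of I₁-invariant vectors {f ∈ Ind_P^G χ : f(g·u) = f(g) for all g ∈ G and u ∈ I₁} onto k × k. In particular, the I₁-invariants of the principal series Ind_P^G χ form a 2-dimensional k-vector space. (Stated in §2.1 of the paper.) -/

import Mathlib

open Matrix

/-- membership in `K_n = {g ∈ GL₂(ℤ_p) : g ≡ 1 (mod pⁿ)}`. -/
def InKn (p : ℕ) [Fact p.Prime] (n : ℕ) (u : GL (Fin 2) ℚ_[p]) : Prop :=
  ∀ i j, ‖(u : Matrix (Fin 2) (Fin 2) ℚ_[p]) i j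
            - (1 : Matrix (Fin 2) (Fin 2) ℚ_[p]) i j‖ ≤ (p : ℝ) ^ (-(n : ℤ))

/-- membership in the pro-p Iwahori subgroup `I₁ ≤ K = GL₂(ℤ_p)`:
matrices in `K` which are upper triangular unipotent modulo `p`. -/
def InI1 (p : ℕ) [Fact p.Prime] (u : GL (Fin 2) ℚ_[p]) : Prop :=
  (∀ i j, ‖(u : Matrix (Fin 2) (Fin 2) ℚ_[p]) i j‖ ≤ 1) ∧
  ‖Matrix.det (u : Matrix (Fin 2) (Fin 2) ℚ_[p])‖ = 1 ∧
  ‖(u : Matrix (Fin 2) (Fin 2) ℚ_[p]) 1 0‖ ≤ (p : ℝ)⁻¹ ∧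
  ‖(u : Matrix (Fin 2) (Fin 2) ℚ_[p]) 0 0 - 1‖ ≤ (p : ℝ)⁻¹ ∧
  ‖(u : Matrix (Fin 2) (Fin 2) ℚ_[p]) 1 1 - 1‖ ≤ (p : ℝ)⁻¹

/-- membership in the principal series `Ind_P^G χ`. -/
def IsIndChi (p : ℕ) [Fact p.Prime] {k : Type*} [Field k]
    (χ₁ χ₂ : ℚ_[p]ˣ →* kˣ) (h : GL (Fin 2) ℚ_[p] → k) : Prop :=
  (∀ b g : GL (Fin 2) ℚ_[p],
    (b : Matrix (Fin 2) (Fin 2) ℚ_[p]) 1 0 = 0 →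
    ∀ a d : ℚ_[p]ˣ,
      (b : Matrix (Fin 2) (Fin 2) ℚ_[p]) 0 0 = (a : ℚ_[p]) →
      (b : Matrix (Fin 2) (Fin 2) ℚ_[p]) 1 1 = (d : ℚ_[p]) →
      h (b * g) = (χ₁ a : k) * (χ₂ d : k) * h g) ∧
  (∃ n : ℕ, 1 ≤ n ∧ ∀ g u, InKn p n u → h (g * u) = h g)

/-- the matrix `Π = (0, 1; p, 0)` as an element of `GL₂(ℚ_p)`. -/
noncomputable def PiMat (p : ℕ) [Fact p.Prime] : GL (Fin 2) ℚ_[p] :=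
  Matrix.GeneralLinearGroup.mkOfDetNeZero !![0, 1; (p : ℚ_[p]), 0]
    (by
      simp [Matrix.det_fin_two_of]
      exact_mod_cast (Fact.out : p.Prime).ne_zero)

variable {p : ℕ} [Fact p.Prime]

private lemma hp1 : (1:ℝ) < p := by exact_mod_cast (Fact.out : p.Prime).one_lt

private lemma norm_sum_le' {s : Finset ℕ} {f : ℕ → ℚ_[p]} {C : ℝ} (hC : 0 ≤ C)
    (h : ∀ i ∈ s, ‖f i‖ ≤ C) : ‖∑ i ∈ s, f i‖ ≤ C :=
  IsUltrametricDist.norm_sum_le_of_forall_le_of_nonneg hC h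

private lemma pow_p_approx {j : ℕ} (hj : 1 ≤ j) {x : ℚ_[p]} (hx : ‖x‖ ≤ (p:ℝ)^(-(j:ℤ))) :
    ‖(1+x)^p - 1‖ ≤ (p:ℝ)^(-(j+1:ℤ)) := by
  have hp := (Fact.out : p.Prime)
  have hx1 : ‖x‖ ≤ 1 := hx.trans (zpow_le_one_of_nonpos₀ hp1.le (by simp))
  have h1 : (1+x)^p - 1 = ∑ i ∈ Finset.range p, x^(i+1) * (p.choose (i+1) : ℚ_[p]) := by
    rw [add_comm, add_pow]
    rw [Finset.sum_range_succ' (fun i => x ^ i * 1 ^ (p - i) * (p.choose i : ℚ_[p]))]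
    simp
  rw [h1]
  apply norm_sum_le' (by positivity)
  intro i hi
  simp only [Finset.mem_range] at hi
  rcases eq_or_lt_of_le (Nat.succ_le_of_lt hi) with h | h
  · have h3 : i + 1 = p := h
    rw [h3]
    simp only [Nat.choose_self, Nat.cast_one, mul_one]
    rw [norm_pow]
    calc ‖x‖^p ≤ ((p:ℝ)^(-(j:ℤ)))^p := pow_le_pow_left₀ (norm_nonneg x) hx p
      _ = (p:ℝ)^((-(j:ℤ))*p) := by
          rw [← zpow_natCast ((p:ℝ)^(-(j:ℤ))), ← _root_.zpow_mul]
      _ ≤ (p:ℝ)^(-(j+1:ℤ)) := by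
          apply zpow_le_zpow_right₀ hp1.le
          have h2 : (2:ℤ) ≤ p := by exact_mod_cast hp.two_le
          have hj' : (1:ℤ) ≤ j := by exact_mod_cast hj
          nlinarith [hj', h2]
  · have hdvd : (p:ℤ) ∣ (p.choose (i+1) : ℤ) := by
      exact_mod_cast hp.dvd_choose_self (Nat.succ_ne_zero i) h
    obtain ⟨m, hm⟩ := hdvd
    have hcast : ((p.choose (i+1) : ℕ) : ℚ_[p]) = (p:ℚ_[p]) * (m : ℚ_[p]) := by
      exact_mod_cast congrArg (Int.cast : ℤ → ℚ_[p]) hm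
    rw [norm_mul]
    calc ‖x^(i+1)‖ * ‖(p.choose (i+1) : ℚ_[p])‖
        ≤ (p:ℝ)^(-(j:ℤ)) * (p:ℝ)⁻¹ := by
          apply mul_le_mul
          · rw [norm_pow]
            calc ‖x‖^(i+1) ≤ ‖x‖^1 := pow_le_pow_of_le_one (norm_nonneg x) hx1 (by omega)
              _ = ‖x‖ := pow_one _
              _ ≤ _ := hx
          · rw [hcast, norm_mul, Padic.norm_p]
            calc (p:ℝ)⁻¹ * ‖(m:ℚ_[p])‖ ≤ (p:ℝ)⁻¹ * 1 := by
                  apply mul_le_mul_of_nonneg_left (Padic.norm_int_le_one m) (by positivity)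
              _ = (p:ℝ)⁻¹ := mul_one _
          · positivity
          · positivity
      _ = (p:ℝ)^(-(j+1:ℤ)) := by
          rw [← _root_.zpow_neg_one, ← zpow_add₀ (by exact_mod_cast hp.pos.ne' : (p:ℝ) ≠ 0)]
          congr 1
          ring

private lemma char_triv {k : Type*} [Field k] [CharP k p] (χ : ℚ_[p]ˣ →* kˣ)
    (hχ : ∃ N : ℕ, 1 ≤ N ∧
      ∀ u : ℚ_[p]ˣ, ‖(u : ℚ_[p]) - 1‖ ≤ (p : ℝ) ^ (-(N : ℤ)) → χ u = 1)
    (u : ℚ_[p]ˣ) (hu : ‖(u : ℚ_[p]) - 1‖ ≤ (p : ℝ)⁻¹) : χ u = 1 := by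
  have hp := (Fact.out : p.Prime)
  obtain ⟨N, hN, hχ⟩ := hχ
  have key : ∀ m : ℕ, ‖((u : ℚ_[p]))^(p^m) - 1‖ ≤ (p:ℝ)^(-((m+1 : ℕ)):ℤ) := by
    intro m
    induction m with
    | zero => simpa [_root_.zpow_neg, zpow_one] using hu
    | succ m ih =>
      have hb := pow_p_approx (j := m+1) (by omega) (x := ((u:ℚ_[p]))^(p^m) - 1) ih
      rw [add_sub_cancel] at hb
      rw [← pow_mul] at hb
      have hpm : p ^ m * p = p ^ (m+1) := by ring
      rw [hpm] at hb
      have hcst : (-((m+1+1:ℕ)) : ℤ) = -(((m+1:ℕ):ℤ)+1) := by push_cast; ring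
      rw [hcst]
      exact hb
  have hm := key (N - 1)
  have hmN : (N - 1 + 1 : ℕ) = N := by omega
  rw [hmN] at hm
  have h1 : χ (u ^ (p ^ (N-1))) = 1 := by
    apply hχ
    rw [Units.val_pow_eq_pow_val]
    exact hm
  rw [map_pow] at h1
  have h2 : ((χ u : kˣ) : k) ^ (p ^ (N-1)) = 1 := by
    have := congrArg (Units.val) h1
    rw [Units.val_pow_eq_pow_val] at this
    simpa using this
  have h3 : ((χ u : kˣ) : k) - 1 = 0 := by
    have hfrob : (((χ u : kˣ) : k) - 1) ^ (p ^ (N-1)) = 0 := by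
      rw [sub_pow_char_pow]
      simp [h2]
    exact pow_eq_zero_iff (pow_ne_zero _ hp.ne_zero) |>.mp hfrob
  ext
  have : ((χ u : kˣ) : k) = 1 := by linear_combination h3
  simpa using this

private lemma pne : (p:ℝ) ≠ 0 := by
  have := (Fact.out : p.Prime).pos; positivity

private lemma norm_mul_p_le {x y : ℚ_[p]} (h : ‖x‖ < ‖y‖) : ‖x‖ * p ≤ ‖y‖ := by
  have hy : y ≠ 0 := by
    intro hy; rw [hy, norm_zero] at h; exact absurd h (not_lt.2 (norm_nonneg x))
  by_cases hx : x = 0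
  · rw [hx, norm_zero, zero_mul]; exact norm_nonneg y
  · rw [Padic.norm_eq_zpow_neg_valuation hx, Padic.norm_eq_zpow_neg_valuation hy] at *
    have hlt : -x.valuation < -y.valuation := by
      exact (zpow_lt_zpow_iff_right₀ hp1).mp h
    calc (p:ℝ)^(-x.valuation) * p = (p:ℝ)^(-x.valuation + 1) := by
          rw [zpow_add₀ pne, zpow_one]
      _ ≤ (p:ℝ)^(-y.valuation) := zpow_le_zpow_right₀ hp1.le (by omega)

/-- elements of norm within p⁻¹ of 1 have norm 1 -/
private lemma norm_eq_one_of {x : ℚ_[p]} (h : ‖x - 1‖ ≤ (p:ℝ)⁻¹) : ‖x‖ = 1 := by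
  have hlt : ‖x - 1‖ < ‖(1:ℚ_[p])‖ := by
    rw [norm_one]
    calc ‖x - 1‖ ≤ (p:ℝ)⁻¹ := h
      _ < 1 := by
        rw [inv_lt_one_iff₀]; right; exact hp1
  calc ‖x‖ = ‖x - 1 + 1‖ := by ring_nf
    _ = ‖(1:ℚ_[p])‖ := by
        rw [Padic.add_eq_max_of_ne (ne_of_lt hlt), max_eq_right hlt.le]
    _ = 1 := norm_one

private lemma unit_mul {a b : ℚ_[p]} (ha : ‖a - 1‖ ≤ (p:ℝ)⁻¹) (hb : ‖b - 1‖ ≤ (p:ℝ)⁻¹) :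
    ‖a * b - 1‖ ≤ (p:ℝ)⁻¹ := by
  have h : a * b - 1 = (a - 1) * b + (b - 1) := by ring
  rw [h]
  have hna : ‖(a - 1) * b + (b - 1)‖ ≤ max ‖(a - 1) * b‖ ‖b - 1‖ :=
    Padic.nonarchimedean _ _
  refine hna.trans (max_le ?_ hb)
  rw [norm_mul, norm_eq_one_of hb, mul_one]
  exact ha

private lemma unit_div {a b : ℚ_[p]} (ha : ‖a - 1‖ ≤ (p:ℝ)⁻¹) (hb : ‖b - 1‖ ≤ (p:ℝ)⁻¹) :
    ‖a / b - 1‖ ≤ (p:ℝ)⁻¹ := by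
  have hb1 : ‖b‖ = 1 := norm_eq_one_of hb
  have hbne : b ≠ 0 := by intro h; rw [h, norm_zero] at hb1; norm_num at hb1
  have h : a / b - 1 = (a - b) / b := by field_simp
  rw [h, norm_div, hb1, div_one]
  have h2 : a - b = (a - 1) - (b - 1) := by ring
  rw [h2, sub_eq_add_neg]
  have hna : ‖(a - 1) + -(b - 1)‖ ≤ max ‖a - 1‖ ‖-(b - 1)‖ :=
    Padic.nonarchimedean _ _
  refine hna.trans (max_le ha ?_)
  rwa [norm_neg]

private lemma norm_le_one_of {x : ℚ_[p]} (h : ‖x - 1‖ ≤ (p:ℝ)⁻¹) : ‖x‖ ≤ 1 :=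
  le_of_eq (norm_eq_one_of h)

-- entry of product of GL elements
private lemma mulE (g h : GL (Fin 2) ℚ_[p]) (i j : Fin 2) :
    ((g * h : GL (Fin 2) ℚ_[p]) : Matrix (Fin 2) (Fin 2) ℚ_[p]) i j
      = (g : Matrix (Fin 2) (Fin 2) ℚ_[p]) i 0 * (h : Matrix (Fin 2) (Fin 2) ℚ_[p]) 0 j
        + (g : Matrix (Fin 2) (Fin 2) ℚ_[p]) i 1 * (h : Matrix (Fin 2) (Fin 2) ℚ_[p]) 1 j := by
  rw [Matrix.GeneralLinearGroup.coe_mul, Matrix.mul_apply, Fin.sum_univ_two]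

private lemma detE (g : GL (Fin 2) ℚ_[p]) :
    ((Matrix.GeneralLinearGroup.det g : ℚ_[p]ˣ) : ℚ_[p])
      = (g : Matrix (Fin 2) (Fin 2) ℚ_[p]) 0 0 * (g : Matrix (Fin 2) (Fin 2) ℚ_[p]) 1 1
        - (g : Matrix (Fin 2) (Fin 2) ℚ_[p]) 0 1 * (g : Matrix (Fin 2) (Fin 2) ℚ_[p]) 1 0 := by
  show Matrix.det (g : Matrix (Fin 2) (Fin 2) ℚ_[p]) = _
  rw [Matrix.det_fin_two]

private lemma detNe (g : GL (Fin 2) ℚ_[p]) :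
    (g : Matrix (Fin 2) (Fin 2) ℚ_[p]) 0 0 * (g : Matrix (Fin 2) (Fin 2) ℚ_[p]) 1 1
      - (g : Matrix (Fin 2) (Fin 2) ℚ_[p]) 0 1 * (g : Matrix (Fin 2) (Fin 2) ℚ_[p]) 1 0 ≠ 0 := by
  rw [← detE]
  exact Units.ne_zero _

-- ## basic I₁ lemmas

private lemma det_sub' {u : GL (Fin 2) ℚ_[p]}
    (hent : ∀ i j, ‖(u : Matrix (Fin 2) (Fin 2) ℚ_[p]) i j‖ ≤ 1)
    (h10 : ‖(u : Matrix (Fin 2) (Fin 2) ℚ_[p]) 1 0‖ ≤ (p:ℝ)⁻¹)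
    (h00 : ‖(u : Matrix (Fin 2) (Fin 2) ℚ_[p]) 0 0 - 1‖ ≤ (p:ℝ)⁻¹)
    (h11 : ‖(u : Matrix (Fin 2) (Fin 2) ℚ_[p]) 1 1 - 1‖ ≤ (p:ℝ)⁻¹) :
    ‖Matrix.det (u : Matrix (Fin 2) (Fin 2) ℚ_[p]) - 1‖ ≤ (p:ℝ)⁻¹ := by
  rw [Matrix.det_fin_two]
  have h : (u : Matrix (Fin 2) (Fin 2) ℚ_[p]) 0 0 * (u : Matrix (Fin 2) (Fin 2) ℚ_[p]) 1 1
      - (u : Matrix (Fin 2) (Fin 2) ℚ_[p]) 0 1 * (u : Matrix (Fin 2) (Fin 2) ℚ_[p]) 1 0 - 1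
    = ((u : Matrix (Fin 2) (Fin 2) ℚ_[p]) 0 0 * (u : Matrix (Fin 2) (Fin 2) ℚ_[p]) 1 1 - 1)
      + -((u : Matrix (Fin 2) (Fin 2) ℚ_[p]) 0 1 * (u : Matrix (Fin 2) (Fin 2) ℚ_[p]) 1 0) := by
    ring
  rw [h]
  have hna := Padic.nonarchimedean
    ((u : Matrix (Fin 2) (Fin 2) ℚ_[p]) 0 0 * (u : Matrix (Fin 2) (Fin 2) ℚ_[p]) 1 1 - 1)
    (-((u : Matrix (Fin 2) (Fin 2) ℚ_[p]) 0 1 * (u : Matrix (Fin 2) (Fin 2) ℚ_[p]) 1 0))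
  refine hna.trans (max_le (unit_mul h00 h11) ?_)
  rw [norm_neg, norm_mul]
  calc ‖(u : Matrix (Fin 2) (Fin 2) ℚ_[p]) 0 1‖ * ‖(u : Matrix (Fin 2) (Fin 2) ℚ_[p]) 1 0‖
      ≤ 1 * (p:ℝ)⁻¹ := mul_le_mul (hent 0 1) h10 (norm_nonneg _) zero_le_one
    _ = (p:ℝ)⁻¹ := one_mul _

private lemma I1_one : InI1 p 1 := by
  refine ⟨?_, by simp, by simp, by simp, by simp⟩
  intro i j
  fin_cases i <;> fin_cases j <;> simp

private lemma Kn1_I1 {u : GL (Fin 2) ℚ_[p]} (hu : InKn p 1 u) : InI1 p u := by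
  have hpinv : ((p:ℝ))^(-(1:ℕ):ℤ) = (p:ℝ)⁻¹ := by
    rw [_root_.zpow_neg]
    norm_num
  have h := fun i j => (hu i j).trans (le_of_eq hpinv)
  have h00 := h 0 0; have h01 := h 0 1; have h10 := h 1 0; have h11 := h 1 1
  simp only [Matrix.one_apply_eq, Matrix.one_apply_ne (by decide : (0:Fin 2) ≠ 1),
    Matrix.one_apply_ne (by decide : (1:Fin 2) ≠ 0), sub_zero] at h00 h01 h10 h11
  have hple1 : (p:ℝ)⁻¹ ≤ 1 := by
    rw [inv_le_one_iff₀]; right; exact hp1.le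
  have hent : ∀ i j, ‖(u : Matrix (Fin 2) (Fin 2) ℚ_[p]) i j‖ ≤ 1 := by
    intro i j
    fin_cases i <;> fin_cases j
    · exact norm_le_one_of h00
    · exact h01.trans hple1
    · exact h10.trans hple1
    · exact norm_le_one_of h11
  exact ⟨hent, norm_eq_one_of (det_sub' hent h10 h00 h11), h10, h00, h11⟩

private lemma I1_det_sub {u : GL (Fin 2) ℚ_[p]} (hu : InI1 p u) :
    ‖Matrix.det (u : Matrix (Fin 2) (Fin 2) ℚ_[p]) - 1‖ ≤ (p:ℝ)⁻¹ :=
  det_sub' hu.1 hu.2.2.1 hu.2.2.2.1 hu.2.2.2.2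

-- ## Π lemmas

private lemma pQne : ((p:ℚ_[p])) ≠ 0 := by
  exact_mod_cast (Fact.out : p.Prime).ne_zero

private lemma pRpos : (0:ℝ) < p := by
  exact_mod_cast (Fact.out : p.Prime).pos

private lemma pinv_le_one : (p:ℝ)⁻¹ ≤ 1 := by
  rw [inv_le_one_iff₀]; right; exact hp1.le

private lemma coePi :
    ((PiMat p : GL (Fin 2) ℚ_[p]) : Matrix (Fin 2) (Fin 2) ℚ_[p])
      = !![0, 1; (p:ℚ_[p]), 0] := rfl

private noncomputable def PiInv (p : ℕ) [Fact p.Prime] : GL (Fin 2) ℚ_[p] :=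
  Matrix.GeneralLinearGroup.mkOfDetNeZero !![0, (p:ℚ_[p])⁻¹; 1, 0]
    (by
      simp only [Matrix.det_fin_two_of, zero_mul, mul_one, zero_sub, neg_ne_zero]
      exact inv_ne_zero (pQne (p := p)))

private lemma PiPiInv :
    ((PiMat p : GL (Fin 2) ℚ_[p]) : Matrix (Fin 2) (Fin 2) ℚ_[p])
      * ((PiInv p : GL (Fin 2) ℚ_[p]) : Matrix (Fin 2) (Fin 2) ℚ_[p])
      = (1 : Matrix (Fin 2) (Fin 2) ℚ_[p]) := by
  rw [coePi]
  rw [show ((PiInv p : GL (Fin 2) ℚ_[p]) : Matrix (Fin 2) (Fin 2) ℚ_[p])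
      = !![0, (p:ℚ_[p])⁻¹; 1, 0] from rfl]
  ext i j
  rw [Matrix.mul_apply, Fin.sum_univ_two]
  fin_cases i <;> fin_cases j <;>
    simp [Matrix.one_apply, mul_inv_cancel₀ (pQne (p := p))]

private lemma Pi_inv_eq : (PiMat p)⁻¹ = PiInv p := by
  have h : PiMat p * PiInv p = 1 := Units.ext PiPiInv
  exact inv_eq_of_mul_eq_one_right h

private lemma coePiInv :
    (((PiMat p)⁻¹ : GL (Fin 2) ℚ_[p]) : Matrix (Fin 2) (Fin 2) ℚ_[p])
      = !![0, (p:ℚ_[p])⁻¹; 1, 0] := by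
  rw [Pi_inv_eq]; rfl

private lemma norm_p_inv : ‖((p:ℚ_[p]))⁻¹‖ = (p:ℝ) := by
  rw [norm_inv, Padic.norm_p, inv_inv]

private lemma conj_coe (u : GL (Fin 2) ℚ_[p]) (i j : Fin 2) :
    ((PiMat p * u * (PiMat p)⁻¹ : GL (Fin 2) ℚ_[p]) : Matrix (Fin 2) (Fin 2) ℚ_[p]) i j
      = !![(u : Matrix (Fin 2) (Fin 2) ℚ_[p]) 1 1,
           (u : Matrix (Fin 2) (Fin 2) ℚ_[p]) 1 0 * (p:ℚ_[p])⁻¹;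
           (p:ℚ_[p]) * (u : Matrix (Fin 2) (Fin 2) ℚ_[p]) 0 1,
           (u : Matrix (Fin 2) (Fin 2) ℚ_[p]) 0 0] i j := by
  have hpn : ((p:ℚ_[p])) ≠ 0 := pQne
  simp only [mulE, coePi, coePiInv]
  fin_cases i <;> fin_cases j <;> simp <;> (try field_simp) <;> (try ring)

private lemma I1_conj {u : GL (Fin 2) ℚ_[p]} (hu : InI1 p u) :
    InI1 p (PiMat p * u * (PiMat p)⁻¹) := by
  obtain ⟨hent, hdet, h10, h00, h11⟩ := hu
  have e00 := conj_coe u 0 0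
  have e01 := conj_coe u 0 1
  have e10 := conj_coe u 1 0
  have e11 := conj_coe u 1 1
  simp only [Matrix.cons_val_zero, Matrix.cons_val_one, Matrix.head_cons, Matrix.head_fin_const,
    Matrix.cons_val', Matrix.empty_val', Matrix.cons_val_fin_one, Matrix.of_apply] at e00 e01 e10 e11
  have hb01 : ‖(u : Matrix (Fin 2) (Fin 2) ℚ_[p]) 1 0 * (p:ℚ_[p])⁻¹‖ ≤ 1 := by
    rw [norm_mul, norm_p_inv]
    calc ‖(u : Matrix (Fin 2) (Fin 2) ℚ_[p]) 1 0‖ * (p:ℝ) ≤ (p:ℝ)⁻¹ * p :=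
          mul_le_mul_of_nonneg_right h10 pRpos.le
      _ = 1 := inv_mul_cancel₀ (pne (p := p))
  have hb10 : ‖(p:ℚ_[p]) * (u : Matrix (Fin 2) (Fin 2) ℚ_[p]) 0 1‖ ≤ (p:ℝ)⁻¹ := by
    rw [norm_mul, Padic.norm_p]
    calc (p:ℝ)⁻¹ * ‖(u : Matrix (Fin 2) (Fin 2) ℚ_[p]) 0 1‖ ≤ (p:ℝ)⁻¹ * 1 :=
          mul_le_mul_of_nonneg_left (hent 0 1) (by rw [inv_nonneg]; exact pRpos.le)
      _ = (p:ℝ)⁻¹ := mul_one _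
  refine ⟨?_, ?_, ?_, ?_, ?_⟩
  · simp only [Fin.forall_fin_two]
    exact ⟨⟨by rw [e00]; exact hent 1 1, by rw [e01]; exact hb01⟩,
      ⟨by rw [e10]; exact hb10.trans pinv_le_one, by rw [e11]; exact hent 0 0⟩⟩
  · rw [Matrix.GeneralLinearGroup.coe_mul, Matrix.GeneralLinearGroup.coe_mul,
      Matrix.det_mul, Matrix.det_mul, coePi, coePiInv,
      Matrix.det_fin_two_of, Matrix.det_fin_two_of]
    simp only [zero_mul, one_mul, zero_sub, mul_zero, mul_one, norm_mul, norm_neg]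
    rw [Padic.norm_p, norm_p_inv, hdet]
    field_simp; exact div_self (pne (p := p))
  · rw [e10]; exact hb10
  · rw [e00]; exact h11
  · rw [e11]; exact h00

-- ## the function f1 and its basic values

private def C1 (g : GL (Fin 2) ℚ_[p]) : Prop :=
  ‖(g : Matrix (Fin 2) (Fin 2) ℚ_[p]) 1 0‖ * p ≤ ‖(g : Matrix (Fin 2) (Fin 2) ℚ_[p]) 1 1‖

private lemma g11_ne {g : GL (Fin 2) ℚ_[p]} (h : C1 g) :
    (g : Matrix (Fin 2) (Fin 2) ℚ_[p]) 1 1 ≠ 0 := by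
  intro h0
  have h' : ‖(g : Matrix (Fin 2) (Fin 2) ℚ_[p]) 1 0‖ * p ≤ 0 := by
    have := h; rw [C1] at this; rwa [h0, norm_zero] at this
  have h10 : (g : Matrix (Fin 2) (Fin 2) ℚ_[p]) 1 0 = 0 := by
    have hn : ‖(g : Matrix (Fin 2) (Fin 2) ℚ_[p]) 1 0‖ ≤ 0 := by nlinarith [pRpos (p := p), norm_nonneg ((g : Matrix (Fin 2) (Fin 2) ℚ_[p]) 1 0)]
    exact norm_le_zero_iff.mp hn
  exact detNe g (by rw [h0, h10]; ring)

private lemma not_C1_norm {g : GL (Fin 2) ℚ_[p]} (h : ¬ C1 g) :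
    ‖(g : Matrix (Fin 2) (Fin 2) ℚ_[p]) 1 1‖ ≤ ‖(g : Matrix (Fin 2) (Fin 2) ℚ_[p]) 1 0‖ := by
  by_contra hlt
  exact h (norm_mul_p_le (lt_of_not_ge hlt))

private lemma not_C1_ne {g : GL (Fin 2) ℚ_[p]} (h : ¬ C1 g) :
    (g : Matrix (Fin 2) (Fin 2) ℚ_[p]) 1 0 ≠ 0 := by
  intro h0
  have := not_C1_norm h
  rw [h0, norm_zero] at this
  have h11 : (g : Matrix (Fin 2) (Fin 2) ℚ_[p]) 1 1 = 0 :=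
    norm_le_zero_iff.mp this
  exact detNe g (by rw [h0, h11]; ring)

private lemma norm_eq_of_sub_lt {x y : ℚ_[p]} (h : ‖x - y‖ < ‖y‖) : ‖x‖ = ‖y‖ := by
  have hx : x = (x - y) + y := by ring
  rw [hx, Padic.add_eq_max_of_ne (ne_of_lt h), max_eq_right h.le]

section F

variable {k : Type*} [Field k] (χ₁ χ₂ : ℚ_[p]ˣ →* kˣ)

private lemma chi_congr (χ : ℚ_[p]ˣ →* kˣ)
    (hT : ∀ u : ℚ_[p]ˣ, ‖(u : ℚ_[p]) - 1‖ ≤ (p:ℝ)⁻¹ → χ u = 1)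
    {x y : ℚ_[p]} (hx : x ≠ 0) (hy : y ≠ 0)
    (h : ‖x - y‖ ≤ (p:ℝ)⁻¹ * ‖y‖) :
    χ (Units.mk0 x hx) = χ (Units.mk0 y hy) := by
  have hypos : (0:ℝ) < ‖y‖ := norm_pos_iff.mpr hy
  have ht : ‖x / y - 1‖ ≤ (p:ℝ)⁻¹ := by
    have hxy : x / y - 1 = (x - y) / y := by field_simp
    rw [hxy, norm_div, div_le_iff₀ hypos]
    exact h
  have hunits : Units.mk0 x hx = Units.mk0 y hy * Units.mk0 (x/y) (div_ne_zero hx hy) := by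
    apply Units.ext
    show x = y * (x / y)
    field_simp
  rw [hunits, _root_.map_mul, hT (Units.mk0 (x/y) (div_ne_zero hx hy)) ht, mul_one]

private noncomputable def f1 (g : GL (Fin 2) ℚ_[p]) : k :=
  letI := Classical.dec (C1 g ∧ (g : Matrix (Fin 2) (Fin 2) ℚ_[p]) 1 1 ≠ 0)
  if h : C1 g ∧ (g : Matrix (Fin 2) (Fin 2) ℚ_[p]) 1 1 ≠ 0 then
    (χ₁ (Matrix.GeneralLinearGroup.det g) : k) * (χ₂ (Units.mk0 _ h.2) : k)
      * ((χ₁ (Units.mk0 _ h.2) : k))⁻¹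
  else 0

private lemma f1_pos {g : GL (Fin 2) ℚ_[p]} (h : C1 g) :
    f1 χ₁ χ₂ g
      = (χ₁ (Matrix.GeneralLinearGroup.det g) : k)
        * (χ₂ (Units.mk0 _ (g11_ne h)) : k)
        * ((χ₁ (Units.mk0 _ (g11_ne h)) : k))⁻¹ := by
  rw [f1, dif_pos ⟨h, g11_ne h⟩]

private lemma f1_neg {g : GL (Fin 2) ℚ_[p]} (h : ¬ C1 g) :
    f1 χ₁ χ₂ g = 0 := by
  rw [f1, dif_neg (by tauto)]

private lemma f1_one : f1 χ₁ χ₂ (1 : GL (Fin 2) ℚ_[p]) = 1 := by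
  have e10 : ((1 : GL (Fin 2) ℚ_[p]) : Matrix (Fin 2) (Fin 2) ℚ_[p]) 1 0 = 0 := by simp
  have e11 : ((1 : GL (Fin 2) ℚ_[p]) : Matrix (Fin 2) (Fin 2) ℚ_[p]) 1 1 = 1 := by simp
  have hC : C1 (1 : GL (Fin 2) ℚ_[p]) := by
    rw [C1, e10, e11]
    simp
  rw [f1_pos χ₁ χ₂ hC]
  have hu : Units.mk0 _ (g11_ne hC) = (1 : ℚ_[p]ˣ) := Units.ext e11
  rw [hu, show (Matrix.GeneralLinearGroup.det (1 : GL (Fin 2) ℚ_[p])) = 1 from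
    _root_.map_one _, _root_.map_one, _root_.map_one]
  simp

private lemma f1_Pi : f1 χ₁ χ₂ (PiMat p) = 0 := by
  apply f1_neg
  intro hC
  rw [C1, coePi] at hC
  have h1 : (!![0,1;(p:ℚ_[p]),0]) 1 0 = (p:ℚ_[p]) := by simp
  have h2 : (!![0,1;(p:ℚ_[p]),0]) 1 1 = 0 := by simp
  rw [h1, h2, Padic.norm_p, norm_zero, inv_mul_cancel₀ (pne (p := p))] at hC
  linarith

end F

section F2

variable {k : Type*} [Field k] (χ₁ χ₂ : ℚ_[p]ˣ →* kˣ)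

private lemma pinv_lt_one : (p:ℝ)⁻¹ < 1 := by
  rw [inv_lt_one_iff₀]; right; exact hp1

/-- left equivariance of f1 -/
private lemma f1_equiv (b g : GL (Fin 2) ℚ_[p])
    (hb10 : (b : Matrix (Fin 2) (Fin 2) ℚ_[p]) 1 0 = 0) (a d : ℚ_[p]ˣ)
    (hb00 : (b : Matrix (Fin 2) (Fin 2) ℚ_[p]) 0 0 = (a : ℚ_[p]))
    (hb11 : (b : Matrix (Fin 2) (Fin 2) ℚ_[p]) 1 1 = (d : ℚ_[p])) :
    f1 χ₁ χ₂ (b * g) = (χ₁ a : k) * (χ₂ d : k) * f1 χ₁ χ₂ g := by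
  have e10 : ((b * g : GL (Fin 2) ℚ_[p]) : Matrix (Fin 2) (Fin 2) ℚ_[p]) 1 0
      = (d : ℚ_[p]) * (g : Matrix (Fin 2) (Fin 2) ℚ_[p]) 1 0 := by
    rw [mulE, hb10, hb11]; ring
  have e11 : ((b * g : GL (Fin 2) ℚ_[p]) : Matrix (Fin 2) (Fin 2) ℚ_[p]) 1 1
      = (d : ℚ_[p]) * (g : Matrix (Fin 2) (Fin 2) ℚ_[p]) 1 1 := by
    rw [mulE, hb10, hb11]; ring
  have hdn : (0:ℝ) < ‖(d : ℚ_[p])‖ := norm_pos_iff.mpr d.ne_zero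
  have hCiff : C1 (b * g) ↔ C1 g := by
    rw [C1, C1, e10, e11, norm_mul, norm_mul, mul_assoc]
    exact mul_le_mul_iff_right₀ hdn
  by_cases hC : C1 g
  · have hC' : C1 (b * g) := hCiff.mpr hC
    rw [f1_pos _ _ hC', f1_pos _ _ hC]
    have hdet : Matrix.GeneralLinearGroup.det (b * g)
        = a * d * Matrix.GeneralLinearGroup.det g := by
      apply Units.ext
      show Matrix.det ((b * g : GL (Fin 2) ℚ_[p]) : Matrix (Fin 2) (Fin 2) ℚ_[p]) = _
      rw [Matrix.GeneralLinearGroup.coe_mul, Matrix.det_mul, Matrix.det_fin_two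
        (b : Matrix (Fin 2) (Fin 2) ℚ_[p]), hb10, hb00, hb11]
      show _ = (a : ℚ_[p]) * d * Matrix.det (g : Matrix (Fin 2) (Fin 2) ℚ_[p])
      ring
    have hmk : Units.mk0 _ (g11_ne hC') = d * Units.mk0 _ (g11_ne hC) :=
      Units.ext e11
    rw [hdet, hmk, _root_.map_mul, _root_.map_mul, _root_.map_mul, _root_.map_mul]
    have n1 : ((χ₁ d : kˣ) : k) ≠ 0 := Units.ne_zero _
    have n2 : ((χ₁ (Units.mk0 _ (g11_ne hC)) : kˣ) : k) ≠ 0 := Units.ne_zero _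
    push_cast
    field_simp
  · rw [f1_neg _ _ (fun h => hC (hCiff.mp h)), f1_neg _ _ hC, mul_zero]

/-- right I₁-invariance of f1 -/
private lemma f1_rinv
    (hT1 : ∀ v : ℚ_[p]ˣ, ‖(v : ℚ_[p]) - 1‖ ≤ (p:ℝ)⁻¹ → χ₁ v = 1)
    (hT2 : ∀ v : ℚ_[p]ˣ, ‖(v : ℚ_[p]) - 1‖ ≤ (p:ℝ)⁻¹ → χ₂ v = 1)
    (g u : GL (Fin 2) ℚ_[p]) (hu : InI1 p u) :
    f1 χ₁ χ₂ (g * u) = f1 χ₁ χ₂ g := by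
  have hdsub := I1_det_sub hu
  obtain ⟨hent, hdet, h10, h00, h11⟩ := hu
  have nu00 : ‖(u : Matrix (Fin 2) (Fin 2) ℚ_[p]) 0 0‖ = 1 := norm_eq_one_of h00
  have nu11 : ‖(u : Matrix (Fin 2) (Fin 2) ℚ_[p]) 1 1‖ = 1 := norm_eq_one_of h11
  have e10 := mulE g u 1 0
  have e11 := mulE g u 1 1
  by_cases hC : C1 g
  · have hg11 := g11_ne hC
    have hg11pos : (0:ℝ) < ‖(g : Matrix (Fin 2) (Fin 2) ℚ_[p]) 1 1‖ := norm_pos_iff.mpr hg11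
    have hc : ‖(g : Matrix (Fin 2) (Fin 2) ℚ_[p]) 1 0‖
        ≤ (p:ℝ)⁻¹ * ‖(g : Matrix (Fin 2) (Fin 2) ℚ_[p]) 1 1‖ := by
      rw [C1] at hC
      nlinarith [pRpos (p := p), norm_nonneg ((g : Matrix (Fin 2) (Fin 2) ℚ_[p]) 1 0),
        mul_le_mul_of_nonneg_right hC (by rw [inv_nonneg]; exact (pRpos (p := p)).le :
          (0:ℝ) ≤ (p:ℝ)⁻¹), inv_mul_cancel₀ (pne (p := p))]
    have hsub : ‖((g * u : GL (Fin 2) ℚ_[p]) : Matrix (Fin 2) (Fin 2) ℚ_[p]) 1 1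
        - (g : Matrix (Fin 2) (Fin 2) ℚ_[p]) 1 1‖
        ≤ (p:ℝ)⁻¹ * ‖(g : Matrix (Fin 2) (Fin 2) ℚ_[p]) 1 1‖ := by
      have hexp : ((g * u : GL (Fin 2) ℚ_[p]) : Matrix (Fin 2) (Fin 2) ℚ_[p]) 1 1
          - (g : Matrix (Fin 2) (Fin 2) ℚ_[p]) 1 1
          = (g : Matrix (Fin 2) (Fin 2) ℚ_[p]) 1 0 * (u : Matrix (Fin 2) (Fin 2) ℚ_[p]) 0 1
            + (g : Matrix (Fin 2) (Fin 2) ℚ_[p]) 1 1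
              * ((u : Matrix (Fin 2) (Fin 2) ℚ_[p]) 1 1 - 1) := by
        rw [e11]; ring
      rw [hexp]
      have hna := Padic.nonarchimedean
        ((g : Matrix (Fin 2) (Fin 2) ℚ_[p]) 1 0 * (u : Matrix (Fin 2) (Fin 2) ℚ_[p]) 0 1)
        ((g : Matrix (Fin 2) (Fin 2) ℚ_[p]) 1 1 * ((u : Matrix (Fin 2) (Fin 2) ℚ_[p]) 1 1 - 1))
      refine hna.trans (max_le ?_ ?_)
      · rw [norm_mul]
        calc ‖(g : Matrix (Fin 2) (Fin 2) ℚ_[p]) 1 0‖ * ‖(u : Matrix (Fin 2) (Fin 2) ℚ_[p]) 0 1‖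
            ≤ ‖(g : Matrix (Fin 2) (Fin 2) ℚ_[p]) 1 0‖ * 1 :=
              mul_le_mul_of_nonneg_left (hent 0 1) (norm_nonneg _)
          _ = ‖(g : Matrix (Fin 2) (Fin 2) ℚ_[p]) 1 0‖ := mul_one _
          _ ≤ _ := hc
      · rw [norm_mul, mul_comm ((p:ℝ))⁻¹]
        exact mul_le_mul_of_nonneg_left h11 (norm_nonneg _)
    have hlt : ‖((g * u : GL (Fin 2) ℚ_[p]) : Matrix (Fin 2) (Fin 2) ℚ_[p]) 1 1
        - (g : Matrix (Fin 2) (Fin 2) ℚ_[p]) 1 1‖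
        < ‖(g : Matrix (Fin 2) (Fin 2) ℚ_[p]) 1 1‖ := by
      refine hsub.trans_lt ?_
      nlinarith [hg11pos, pinv_lt_one (p := p)]
    have hne' : ‖((g * u : GL (Fin 2) ℚ_[p]) : Matrix (Fin 2) (Fin 2) ℚ_[p]) 1 1‖
        = ‖(g : Matrix (Fin 2) (Fin 2) ℚ_[p]) 1 1‖ := norm_eq_of_sub_lt hlt
    have hgune : ((g * u : GL (Fin 2) ℚ_[p]) : Matrix (Fin 2) (Fin 2) ℚ_[p]) 1 1 ≠ 0 := by
      intro h0
      rw [h0, norm_zero] at hne'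
      exact absurd hne'.symm (ne_of_gt hg11pos)
    have hC' : C1 (g * u) := by
      rw [C1, hne', e10]
      have hna := Padic.nonarchimedean
        ((g : Matrix (Fin 2) (Fin 2) ℚ_[p]) 1 0 * (u : Matrix (Fin 2) (Fin 2) ℚ_[p]) 0 0)
        ((g : Matrix (Fin 2) (Fin 2) ℚ_[p]) 1 1 * (u : Matrix (Fin 2) (Fin 2) ℚ_[p]) 1 0)
      have hb : ‖(g : Matrix (Fin 2) (Fin 2) ℚ_[p]) 1 0 * (u : Matrix (Fin 2) (Fin 2) ℚ_[p]) 0 0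
          + (g : Matrix (Fin 2) (Fin 2) ℚ_[p]) 1 1 * (u : Matrix (Fin 2) (Fin 2) ℚ_[p]) 1 0‖
          ≤ (p:ℝ)⁻¹ * ‖(g : Matrix (Fin 2) (Fin 2) ℚ_[p]) 1 1‖ := by
        refine hna.trans (max_le ?_ ?_)
        · rw [norm_mul, nu00, mul_one]; exact hc
        · rw [norm_mul, mul_comm ((p:ℝ))⁻¹]
          exact mul_le_mul_of_nonneg_left h10 (norm_nonneg _)
      calc ‖(g : Matrix (Fin 2) (Fin 2) ℚ_[p]) 1 0 * (u : Matrix (Fin 2) (Fin 2) ℚ_[p]) 0 0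
          + (g : Matrix (Fin 2) (Fin 2) ℚ_[p]) 1 1 * (u : Matrix (Fin 2) (Fin 2) ℚ_[p]) 1 0‖ * p
          ≤ ((p:ℝ)⁻¹ * ‖(g : Matrix (Fin 2) (Fin 2) ℚ_[p]) 1 1‖) * p :=
            mul_le_mul_of_nonneg_right hb (pRpos (p := p)).le
        _ = ‖(g : Matrix (Fin 2) (Fin 2) ℚ_[p]) 1 1‖ := by
            field_simp; exact div_self (pne (p := p))
    rw [f1_pos _ _ hC', f1_pos _ _ hC]
    have hdeteq : Matrix.GeneralLinearGroup.det (g * u)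
        = Matrix.GeneralLinearGroup.det g * Matrix.GeneralLinearGroup.det u :=
      _root_.map_mul _ _ _
    have hchi_det : χ₁ (Matrix.GeneralLinearGroup.det u) = 1 := by
      apply hT1
      exact hdsub
    have h2 : χ₂ (Units.mk0 _ hgune) = χ₂ (Units.mk0 _ hg11) :=
      chi_congr χ₂ hT2 hgune hg11 hsub
    have h1 : χ₁ (Units.mk0 _ hgune) = χ₁ (Units.mk0 _ hg11) :=
      chi_congr χ₁ hT1 hgune hg11 hsub
    rw [hdeteq, _root_.map_mul, hchi_det, mul_one]
    rw [show Units.mk0 _ (g11_ne hC') = Units.mk0 _ hgune from rfl,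
      show Units.mk0 _ (g11_ne hC) = Units.mk0 _ hg11 from rfl, h1, h2]
  · have hC' : ¬ C1 (g * u) := by
      intro hCu
      have hdc := not_C1_norm hC
      have hcne := not_C1_ne hC
      have hcpos : (0:ℝ) < ‖(g : Matrix (Fin 2) (Fin 2) ℚ_[p]) 1 0‖ := norm_pos_iff.mpr hcne
      have hsub : ‖((g * u : GL (Fin 2) ℚ_[p]) : Matrix (Fin 2) (Fin 2) ℚ_[p]) 1 0
          - (g : Matrix (Fin 2) (Fin 2) ℚ_[p]) 1 0 * (u : Matrix (Fin 2) (Fin 2) ℚ_[p]) 0 0‖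
          < ‖(g : Matrix (Fin 2) (Fin 2) ℚ_[p]) 1 0 * (u : Matrix (Fin 2) (Fin 2) ℚ_[p]) 0 0‖ := by
        have hexp : ((g * u : GL (Fin 2) ℚ_[p]) : Matrix (Fin 2) (Fin 2) ℚ_[p]) 1 0
            - (g : Matrix (Fin 2) (Fin 2) ℚ_[p]) 1 0 * (u : Matrix (Fin 2) (Fin 2) ℚ_[p]) 0 0
            = (g : Matrix (Fin 2) (Fin 2) ℚ_[p]) 1 1 * (u : Matrix (Fin 2) (Fin 2) ℚ_[p]) 1 0 := by
          rw [e10]; ring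
        rw [hexp, norm_mul, norm_mul, nu00, mul_one]
        calc ‖(g : Matrix (Fin 2) (Fin 2) ℚ_[p]) 1 1‖ * ‖(u : Matrix (Fin 2) (Fin 2) ℚ_[p]) 1 0‖
            ≤ ‖(g : Matrix (Fin 2) (Fin 2) ℚ_[p]) 1 0‖ * (p:ℝ)⁻¹ :=
              mul_le_mul hdc h10 (norm_nonneg _) (norm_nonneg _)
          _ < ‖(g : Matrix (Fin 2) (Fin 2) ℚ_[p]) 1 0‖ := by
              nlinarith [pinv_lt_one (p := p), hcpos]
      have hc'n : ‖((g * u : GL (Fin 2) ℚ_[p]) : Matrix (Fin 2) (Fin 2) ℚ_[p]) 1 0‖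
          = ‖(g : Matrix (Fin 2) (Fin 2) ℚ_[p]) 1 0‖ := by
        rw [norm_eq_of_sub_lt hsub, norm_mul, nu00, mul_one]
      have hd'n : ‖((g * u : GL (Fin 2) ℚ_[p]) : Matrix (Fin 2) (Fin 2) ℚ_[p]) 1 1‖
          ≤ ‖(g : Matrix (Fin 2) (Fin 2) ℚ_[p]) 1 0‖ := by
        rw [e11]
        have hna := Padic.nonarchimedean
          ((g : Matrix (Fin 2) (Fin 2) ℚ_[p]) 1 0 * (u : Matrix (Fin 2) (Fin 2) ℚ_[p]) 0 1)
          ((g : Matrix (Fin 2) (Fin 2) ℚ_[p]) 1 1 * (u : Matrix (Fin 2) (Fin 2) ℚ_[p]) 1 1)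
        refine hna.trans (max_le ?_ ?_)
        · rw [norm_mul]
          calc ‖(g : Matrix (Fin 2) (Fin 2) ℚ_[p]) 1 0‖ * ‖(u : Matrix (Fin 2) (Fin 2) ℚ_[p]) 0 1‖
              ≤ ‖(g : Matrix (Fin 2) (Fin 2) ℚ_[p]) 1 0‖ * 1 :=
                mul_le_mul_of_nonneg_left (hent 0 1) (norm_nonneg _)
            _ = _ := mul_one _
        · rw [norm_mul, nu11, mul_one]; exact hdc
      rw [C1, hc'n] at hCu
      nlinarith [hp1 (p := p), hcpos, hd'n, hCu]
    rw [f1_neg _ _ hC', f1_neg _ _ hC]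

end F2

section KEY

variable {k : Type*} [Field k] (χ₁ χ₂ : ℚ_[p]ˣ →* kˣ)

private lemma C1_le {g : GL (Fin 2) ℚ_[p]} (hC : C1 g) :
    ‖(g : Matrix (Fin 2) (Fin 2) ℚ_[p]) 1 0‖
      ≤ (p:ℝ)⁻¹ * ‖(g : Matrix (Fin 2) (Fin 2) ℚ_[p]) 1 1‖ := by
  rw [C1] at hC
  nlinarith [pRpos (p := p), norm_nonneg ((g : Matrix (Fin 2) (Fin 2) ℚ_[p]) 1 0),
    mul_le_mul_of_nonneg_right hC (by rw [inv_nonneg]; exact (pRpos (p := p)).le :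
      (0:ℝ) ≤ (p:ℝ)⁻¹), inv_mul_cancel₀ (pne (p := p))]

private lemma gPiInv_e10 (g : GL (Fin 2) ℚ_[p]) :
    ((g * (PiMat p)⁻¹ : GL (Fin 2) ℚ_[p]) : Matrix (Fin 2) (Fin 2) ℚ_[p]) 1 0
      = (g : Matrix (Fin 2) (Fin 2) ℚ_[p]) 1 1 := by
  rw [mulE, coePiInv]; simp

private lemma gPiInv_e11 (g : GL (Fin 2) ℚ_[p]) :
    ((g * (PiMat p)⁻¹ : GL (Fin 2) ℚ_[p]) : Matrix (Fin 2) (Fin 2) ℚ_[p]) 1 1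
      = (g : Matrix (Fin 2) (Fin 2) ℚ_[p]) 1 0 * ((p:ℚ_[p]))⁻¹ := by
  rw [mulE, coePiInv]; simp

private lemma C1_gPiInv_iff (g : GL (Fin 2) ℚ_[p]) :
    C1 (g * (PiMat p)⁻¹)
      ↔ ‖(g : Matrix (Fin 2) (Fin 2) ℚ_[p]) 1 1‖ ≤ ‖(g : Matrix (Fin 2) (Fin 2) ℚ_[p]) 1 0‖ := by
  rw [C1, gPiInv_e10, gPiInv_e11, norm_mul, norm_p_inv]
  constructor
  · intro h; nlinarith [pRpos (p := p)]
  · intro h; nlinarith [pRpos (p := p)]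

private lemma detPiInv :
    Matrix.det (((PiMat p)⁻¹ : GL (Fin 2) ℚ_[p]) : Matrix (Fin 2) (Fin 2) ℚ_[p])
      = -((p:ℚ_[p]))⁻¹ := by
  rw [coePiInv, Matrix.det_fin_two_of]
  ring

private lemma mulE3 (a b c : GL (Fin 2) ℚ_[p]) :
    ((a * (b * c) : GL (Fin 2) ℚ_[p]) : Matrix (Fin 2) (Fin 2) ℚ_[p])
      = (a : Matrix (Fin 2) (Fin 2) ℚ_[p]) * ((b : Matrix (Fin 2) (Fin 2) ℚ_[p])
          * (c : Matrix (Fin 2) (Fin 2) ℚ_[p])) := by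
  rw [Matrix.GeneralLinearGroup.coe_mul, Matrix.GeneralLinearGroup.coe_mul]

/-- the key decomposition lemma -/
private lemma key (f : GL (Fin 2) ℚ_[p] → k) (hf : IsIndChi p χ₁ χ₂ f)
    (hfi : ∀ g u, InI1 p u → f (g * u) = f g) (g : GL (Fin 2) ℚ_[p]) :
    f g = f 1 * f1 χ₁ χ₂ g + f (PiMat p) * f1 χ₁ χ₂ (g * (PiMat p)⁻¹) := by
  have hpinv : ((p:ℚ_[p])) ≠ 0 := pQne
  obtain ⟨w, x, y, z, hw, hx, hy, hz⟩ :
      ∃ w x y z : ℚ_[p], (g : Matrix (Fin 2) (Fin 2) ℚ_[p]) 0 0 = w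
        ∧ (g : Matrix (Fin 2) (Fin 2) ℚ_[p]) 0 1 = x
        ∧ (g : Matrix (Fin 2) (Fin 2) ℚ_[p]) 1 0 = y
        ∧ (g : Matrix (Fin 2) (Fin 2) ℚ_[p]) 1 1 = z :=
    ⟨_, _, _, _, rfl, rfl, rfl, rfl⟩
  have hgmat : (g : Matrix (Fin 2) (Fin 2) ℚ_[p]) = !![w, x; y, z] := by
    rw [← hw, ← hx, ← hy, ← hz]
    exact Matrix.etaExpand_eq (g : Matrix (Fin 2) (Fin 2) ℚ_[p]) ▸ rfl
  have hDne : w * z - x * y ≠ 0 := by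
    have := detNe g
    rwa [hw, hx, hy, hz] at this
  by_cases hC : C1 g
  · -- case g ∈ P I₁ : g = b u
    have hzne : z ≠ 0 := by rw [← hz]; exact g11_ne hC
    have hCn : ‖y‖ * p ≤ ‖z‖ := by rw [← hy, ← hz]; exact hC
    have hzpos : (0:ℝ) < ‖z‖ := norm_pos_iff.mpr hzne
    have hbdet : Matrix.det !![(w * z - x * y) * z⁻¹, x; 0, z] ≠ 0 := by
      rw [Matrix.det_fin_two_of]
      field_simp
      simpa using hDne
    have hudet : Matrix.det !![(1:ℚ_[p]), 0; y * z⁻¹, 1] ≠ 0 := by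
      rw [Matrix.det_fin_two_of]; simp
    obtain ⟨b, cb⟩ : ∃ b : GL (Fin 2) ℚ_[p],
        (b : Matrix (Fin 2) (Fin 2) ℚ_[p]) = !![(w * z - x * y) * z⁻¹, x; 0, z] :=
      ⟨Matrix.GeneralLinearGroup.mkOfDetNeZero _ hbdet, rfl⟩
    obtain ⟨u, cu⟩ : ∃ u : GL (Fin 2) ℚ_[p],
        (u : Matrix (Fin 2) (Fin 2) ℚ_[p]) = !![(1:ℚ_[p]), 0; y * z⁻¹, 1] :=
      ⟨Matrix.GeneralLinearGroup.mkOfDetNeZero _ hudet, rfl⟩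
    have hsmall : ‖y * z⁻¹‖ ≤ (p:ℝ)⁻¹ := by
      rw [norm_mul, norm_inv, mul_inv_le_iff₀ hzpos]
      nlinarith [pRpos (p := p), norm_nonneg y, inv_mul_cancel₀ (pne (p := p)),
        mul_le_mul_of_nonneg_right hCn (by rw [inv_nonneg]; exact (pRpos (p := p)).le :
          (0:ℝ) ≤ (p:ℝ)⁻¹)]
    have huI1 : InI1 p u := by
      refine ⟨?_, ?_, ?_, ?_, ?_⟩
      · simp only [Fin.forall_fin_two, cu]
        refine ⟨⟨by simp, by simp⟩, ?_, by simp⟩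
        simpa using hsmall.trans (pinv_le_one (p := p))
      · rw [cu, Matrix.det_fin_two_of]; simp
      · rw [cu]; simpa using hsmall
      · rw [cu]; simp
      · rw [cu]; simp
    have hbu : b * u = g := by
      apply Units.ext
      show (b : Matrix (Fin 2) (Fin 2) ℚ_[p]) * (u : Matrix (Fin 2) (Fin 2) ℚ_[p])
        = (g : Matrix (Fin 2) (Fin 2) ℚ_[p])
      rw [cb, cu, hgmat, Matrix.mul_fin_two]
      ext i j; fin_cases i <;> fin_cases j <;> simp <;> field_simp <;> ring
    have haval : ((Matrix.GeneralLinearGroup.det g * (Units.mk0 z hzne)⁻¹ : ℚ_[p]ˣ) : ℚ_[p])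
        = (w * z - x * y) * z⁻¹ := by
      rw [Units.val_mul, Units.val_inv_eq_inv_val, detE, hw, hx, hy, hz]
      rfl
    have happ := hf.1 b u (by rw [cb]; rfl)
      (Matrix.GeneralLinearGroup.det g * (Units.mk0 z hzne)⁻¹) (Units.mk0 z hzne)
      (by rw [cb]; exact haval.symm) (by rw [cb]; rfl)
    have hfu : f u = f 1 := by
      have := hfi 1 u huI1
      rwa [one_mul] at this
    have hf2 : f1 χ₁ χ₂ (g * (PiMat p)⁻¹) = 0 := by
      apply f1_neg
      intro hCu
      rw [C1_gPiInv_iff, hy, hz] at hCu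
      rcases eq_or_ne y 0 with h0 | h0
      · rw [h0, norm_zero] at hCu
        exact hzne (norm_le_zero_iff.mp hCu)
      · have hypos : (0:ℝ) < ‖y‖ := norm_pos_iff.mpr h0
        nlinarith [hp1 (p := p)]
    conv_lhs => rw [← hbu]
    rw [happ, hfu, hf2, mul_zero, add_zero, f1_pos _ _ hC]
    rw [show Units.mk0 _ (g11_ne hC) = Units.mk0 z hzne from Units.ext hz]
    rw [_root_.map_mul, map_inv, Units.val_mul, Units.val_inv_eq_inv_val]
    ring
  · -- case g ∈ P Π I₁
    have hyne : y ≠ 0 := by rw [← hy]; exact not_C1_ne hC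
    have hdc : ‖z‖ ≤ ‖y‖ := by rw [← hy, ← hz]; exact not_C1_norm hC
    have hypos : (0:ℝ) < ‖y‖ := norm_pos_iff.mpr hyne
    have hCu : C1 (g * (PiMat p)⁻¹) := by
      rw [C1_gPiInv_iff, hy, hz]; exact hdc
    have hbdet : Matrix.det !![-(w * z - x * y) * y⁻¹, w * ((p:ℚ_[p]))⁻¹;
        0, y * ((p:ℚ_[p]))⁻¹] ≠ 0 := by
      rw [Matrix.det_fin_two_of]
      field_simp
      intro h
      exact hDne (by rw [← neg_eq_zero, neg_sub]; simpa [hpinv] using h)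
    have hudet : Matrix.det !![(1:ℚ_[p]), z * y⁻¹; 0, 1] ≠ 0 := by
      rw [Matrix.det_fin_two_of]; simp
    obtain ⟨b, cb⟩ : ∃ b : GL (Fin 2) ℚ_[p],
        (b : Matrix (Fin 2) (Fin 2) ℚ_[p])
          = !![-(w * z - x * y) * y⁻¹, w * ((p:ℚ_[p]))⁻¹; 0, y * ((p:ℚ_[p]))⁻¹] :=
      ⟨Matrix.GeneralLinearGroup.mkOfDetNeZero _ hbdet, rfl⟩
    obtain ⟨u, cu⟩ : ∃ u : GL (Fin 2) ℚ_[p],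
        (u : Matrix (Fin 2) (Fin 2) ℚ_[p]) = !![(1:ℚ_[p]), z * y⁻¹; 0, 1] :=
      ⟨Matrix.GeneralLinearGroup.mkOfDetNeZero _ hudet, rfl⟩
    have hsmall : ‖z * y⁻¹‖ ≤ 1 := by
      rw [norm_mul, norm_inv, mul_inv_le_iff₀ hypos, one_mul]
      exact hdc
    have huI1 : InI1 p u := by
      refine ⟨?_, ?_, ?_, ?_, ?_⟩
      · simp only [Fin.forall_fin_two, cu]
        refine ⟨⟨by simp, by simpa using hsmall⟩, by simp, by simp⟩
      · rw [cu, Matrix.det_fin_two_of]; simp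
      · rw [cu]; simp
      · rw [cu]; simp
      · rw [cu]; simp
    have hbu : b * (PiMat p * u) = g := by
      apply Units.ext
      show (b : Matrix (Fin 2) (Fin 2) ℚ_[p])
          * (((PiMat p * u : GL (Fin 2) ℚ_[p])) : Matrix (Fin 2) (Fin 2) ℚ_[p])
        = (g : Matrix (Fin 2) (Fin 2) ℚ_[p])
      rw [Matrix.GeneralLinearGroup.coe_mul, cb, cu, coePi, hgmat,
        Matrix.mul_fin_two, Matrix.mul_fin_two]
      ext i j
      fin_cases i <;> fin_cases j <;>
        simp only [Matrix.cons_val_zero, Matrix.cons_val_one, Matrix.head_cons,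
          Matrix.head_fin_const, Matrix.cons_val', Matrix.empty_val',
          Matrix.cons_val_fin_one, Matrix.of_apply, Fin.zero_eta, Fin.mk_one] <;>
        (try rfl) <;> (try field_simp) <;> (try ring)
    have hg11' : ((g * (PiMat p)⁻¹ : GL (Fin 2) ℚ_[p]) : Matrix (Fin 2) (Fin 2) ℚ_[p]) 1 1 ≠ 0 :=
      g11_ne hCu
    have hdU : ((Units.mk0 _ hg11' : ℚ_[p]ˣ) : ℚ_[p]) = y * ((p:ℚ_[p]))⁻¹ := by
      have h := gPiInv_e11 g
      rw [hy] at h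
      exact h
    have hdetval : ((Matrix.GeneralLinearGroup.det (g * (PiMat p)⁻¹) : ℚ_[p]ˣ) : ℚ_[p])
        = (w * z - x * y) * (-((p:ℚ_[p]))⁻¹) := by
      have h : Matrix.det ((g * (PiMat p)⁻¹ : GL (Fin 2) ℚ_[p]) : Matrix (Fin 2) (Fin 2) ℚ_[p])
          = (w * z - x * y) * (-((p:ℚ_[p]))⁻¹) := by
        rw [Matrix.GeneralLinearGroup.coe_mul, Matrix.det_mul, detPiInv, Matrix.det_fin_two,
          hw, hx, hy, hz]
      exact h
    have haval : ((Matrix.GeneralLinearGroup.det (g * (PiMat p)⁻¹)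
        * (Units.mk0 _ hg11')⁻¹ : ℚ_[p]ˣ) : ℚ_[p]) = -(w * z - x * y) * y⁻¹ := by
      rw [Units.val_mul, Units.val_inv_eq_inv_val, hdetval, hdU]
      rw [mul_inv, inv_inv]
      field_simp
    have happ := hf.1 b (PiMat p * u) (by rw [cb]; rfl)
      (Matrix.GeneralLinearGroup.det (g * (PiMat p)⁻¹) * (Units.mk0 _ hg11')⁻¹)
      (Units.mk0 _ hg11')
      (by rw [cb]; exact haval.symm) (by rw [cb]; exact hdU.symm)
    have hfPiu : f (PiMat p * u) = f (PiMat p) := hfi (PiMat p) u huI1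
    have hf1g : f1 χ₁ χ₂ g = 0 := f1_neg _ _ hC
    conv_lhs => rw [← hbu]
    rw [happ, hfPiu, hf1g, mul_zero, f1_pos _ _ hCu]
    rw [show Units.mk0 _ (g11_ne hCu) = Units.mk0 _ hg11' from rfl]
    rw [_root_.map_mul, map_inv, Units.val_mul, Units.val_inv_eq_inv_val]
    ring

end KEY

section FINAL

variable {k : Type*} [Field k] (χ₁ χ₂ : ℚ_[p]ˣ →* kˣ)

private lemma f1_PiInv : f1 χ₁ χ₂ ((PiMat p)⁻¹) = 0 := by
  apply f1_neg
  intro hC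
  rw [C1, coePiInv] at hC
  have h1 : (!![0,(p:ℚ_[p])⁻¹;1,0]) 1 0 = 1 := by simp
  have h2 : (!![0,(p:ℚ_[p])⁻¹;1,0]) 1 1 = 0 := by simp
  rw [h1, h2, norm_one, norm_zero, one_mul] at hC
  exact absurd hC (not_le.mpr (pRpos (p := p)))

end FINAL

/-- stated in §2.1 of the paper.  The evaluation map
`f ↦ (f(1), f(Π))` is a (`k`-linear) bijection from the space of
`I₁`-invariant vectors of the principal series `Ind_P^G χ` onto `k × k`;
in particular the `I₁`-invariants form a 2-dimensional `k`-vector space. -/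
theorem statement_3 (p : ℕ) [Fact p.Prime] (k : Type*) [Field k] [CharP k p]
    (χ₁ χ₂ : ℚ_[p]ˣ →* kˣ)
    (hχ₁ : ∃ N : ℕ, 1 ≤ N ∧
      ∀ u : ℚ_[p]ˣ, ‖(u : ℚ_[p]) - 1‖ ≤ (p : ℝ) ^ (-(N : ℤ)) → χ₁ u = 1)
    (hχ₂ : ∃ N : ℕ, 1 ≤ N ∧
      ∀ u : ℚ_[p]ˣ, ‖(u : ℚ_[p]) - 1‖ ≤ (p : ℝ) ^ (-(N : ℤ)) → χ₂ u = 1) :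
    Function.Bijective
      (fun f : {f : GL (Fin 2) ℚ_[p] → k //
          IsIndChi p χ₁ χ₂ f ∧ ∀ g u, InI1 p u → f (g * u) = f g} =>
        ((f.1 1, f.1 (PiMat p)) : k × k)) := by
  have hT1 : ∀ u : ℚ_[p]ˣ, ‖(u : ℚ_[p]) - 1‖ ≤ (p:ℝ)⁻¹ → χ₁ u = 1 :=
    fun u hu => char_triv χ₁ hχ₁ u hu
  have hT2 : ∀ u : ℚ_[p]ˣ, ‖(u : ℚ_[p]) - 1‖ ≤ (p:ℝ)⁻¹ → χ₂ u = 1 :=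
    fun u hu => char_triv χ₂ hχ₂ u hu
  constructor
  · -- injectivity
    intro f f' hval
    apply Subtype.ext
    funext g
    have h1 := key χ₁ χ₂ f.1 f.2.1 f.2.2 g
    have h2 := key χ₁ χ₂ f'.1 f'.2.1 f'.2.2 g
    have e1 : f.1 1 = f'.1 1 := congrArg Prod.fst hval
    have e2 : f.1 (PiMat p) = f'.1 (PiMat p) := congrArg Prod.snd hval
    rw [h1, h2, e1, e2]
  · -- surjectivity
    rintro ⟨xv, yv⟩
    have hinv : ∀ g u : GL (Fin 2) ℚ_[p], InI1 p u →
        (xv * f1 χ₁ χ₂ (g * u) + yv * f1 χ₁ χ₂ (g * u * (PiMat p)⁻¹))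
          = xv * f1 χ₁ χ₂ g + yv * f1 χ₁ χ₂ (g * (PiMat p)⁻¹) := by
      intro g u huI
      have h1 := f1_rinv χ₁ χ₂ hT1 hT2 g u huI
      have h2 : f1 χ₁ χ₂ (g * u * (PiMat p)⁻¹) = f1 χ₁ χ₂ (g * (PiMat p)⁻¹) := by
        have hgrp : g * u * (PiMat p)⁻¹
            = (g * (PiMat p)⁻¹) * (PiMat p * u * (PiMat p)⁻¹) := by
          group
        rw [hgrp]
        exact f1_rinv χ₁ χ₂ hT1 hT2 _ _ (I1_conj huI)
      rw [h1, h2]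
    refine ⟨⟨fun g => xv * f1 χ₁ χ₂ g + yv * f1 χ₁ χ₂ (g * (PiMat p)⁻¹), ⟨?_, ?_⟩, ?_⟩, ?_⟩
    · -- left equivariance
      intro b g hb10 a d hb00 hb11
      have h1 := f1_equiv χ₁ χ₂ b g hb10 a d hb00 hb11
      have h2 := f1_equiv χ₁ χ₂ b (g * (PiMat p)⁻¹) hb10 a d hb00 hb11
      simp only
      rw [show b * g * (PiMat p)⁻¹ = b * (g * (PiMat p)⁻¹) from mul_assoc _ _ _]
      rw [h1, h2]
      ring
    · -- smoothness
      refine ⟨1, le_refl 1, ?_⟩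
      intro g u hu
      exact hinv g u (Kn1_I1 hu)
    · -- I₁-invariance
      intro g u hu
      exact hinv g u hu
    · -- evaluation
      have hv1 : xv * f1 χ₁ χ₂ (1 : GL (Fin 2) ℚ_[p])
          + yv * f1 χ₁ χ₂ ((1 : GL (Fin 2) ℚ_[p]) * (PiMat p)⁻¹) = xv := by
        rw [one_mul, f1_one, f1_PiInv]
        ring
      have hv2 : xv * f1 χ₁ χ₂ (PiMat p)
          + yv * f1 χ₁ χ₂ (PiMat p * (PiMat p)⁻¹) = yv := by
        rw [show PiMat p * (PiMat p)⁻¹ = 1 by group, f1_one, f1_Pi]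
        ring
      show (xv * f1 χ₁ χ₂ (1 : GL (Fin 2) ℚ_[p])
          + yv * f1 χ₁ χ₂ ((1 : GL (Fin 2) ℚ_[p]) * (PiMat p)⁻¹),
        xv * f1 χ₁ χ₂ (PiMat p) + yv * f1 χ₁ χ₂ (PiMat p * (PiMat p)⁻¹)) = (xv, yv)
      rw [hv1, hv2]
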